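/- Every non-central element x of E_m^ν is conjugate to −x, and consequently every nontrivial normal subgroup of E_m^ν intersects the center nontrivially. -/

import Mathlib

/-- Relators for the group `E_m^ν`: generators are `none` (the central element `-1`)
and `some i` (the generator `xᵢ`, 0-indexed); relations are `(-1)² = 1`, `-1` central,
`xᵢ² = ν`, far commutation `xᵢxⱼ = xⱼxᵢ` for `|i-j| ≥ 2`, and adjacent
anticommutation `x_{i+1}xᵢ = (-1)·xᵢx_{i+1}`. -/
def Erel (m : ℕ) (ν : ℤˣ) : Set (FreeGroup (Option (Fin m))) :=
  {FreeGroup.of none ^ 2} ∪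
    {r | ∃ i : Fin m, r = FreeGroup.of none * FreeGroup.of (some i) *
        (FreeGroup.of none)⁻¹ * (FreeGroup.of (some i))⁻¹} ∪
    {r | ∃ i : Fin m, r = FreeGroup.of (some i) ^ 2 *
        (if ν = 1 then 1 else FreeGroup.of none)⁻¹} ∪
    {r | ∃ i j : Fin m, (i : ℕ) + 2 ≤ (j : ℕ) ∧ r = FreeGroup.of (some i) *
        FreeGroup.of (some j) * (FreeGroup.of (some i))⁻¹ * (FreeGroup.of (some j))⁻¹} ∪
    {r | ∃ i j : Fin m, (j : ℕ) = (i : ℕ) + 1 ∧ r = FreeGroup.of (some j) *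
        FreeGroup.of (some i) *
        (FreeGroup.of none * FreeGroup.of (some i) * FreeGroup.of (some j))⁻¹}

/-- The group `E_m^ν`. -/
abbrev Egrp (m : ℕ) (ν : ℤˣ) := PresentedGroup (Erel m ν)

/-- The central element `-1` of `E_m^ν`. -/
def neg1 (m : ℕ) (ν : ℤˣ) : Egrp m ν := PresentedGroup.of none

/-- The generator `x_{i+1}` of `E_m^ν` (0-indexed: `xgen m ν i` is the paper's `x_{i+1}`). -/
def xgen (m : ℕ) (ν : ℤˣ) (i : Fin m) : Egrp m ν := PresentedGroup.of (some i)

namespace Stmt14Aux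

variable (m : ℕ) (ν : ℤˣ)

lemma rel_one {r : FreeGroup (Option (Fin m))} (hr : r ∈ Erel m ν) :
    PresentedGroup.mk (Erel m ν) r = 1 :=
  (QuotientGroup.eq_one_iff r).2 (Subgroup.subset_normalClosure hr)

lemma hz2 : neg1 m ν * neg1 m ν = 1 := by
  have h := rel_one m ν (r := FreeGroup.of none ^ 2)
    (Or.inl (Or.inl (Or.inl (Or.inl rfl))))
  simp only [sq, map_mul] at h
  exact h

lemma hzx (i : Fin m) : neg1 m ν * xgen m ν i = xgen m ν i * neg1 m ν := by
  have h := rel_one m ν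
    (r := FreeGroup.of none * FreeGroup.of (some i) *
      (FreeGroup.of none)⁻¹ * (FreeGroup.of (some i))⁻¹)
    (Or.inl (Or.inl (Or.inl (Or.inr ⟨i, rfl⟩))))
  simp only [map_mul, map_inv] at h
  exact mul_inv_eq_iff_eq_mul.mp (mul_inv_eq_one.mp h)

lemma far (i j : Fin m) (h : (i : ℕ) + 2 ≤ (j : ℕ)) :
    xgen m ν i * xgen m ν j = xgen m ν j * xgen m ν i := by
  have h := rel_one m ν
    (r := FreeGroup.of (some i) * FreeGroup.of (some j) *
      (FreeGroup.of (some i))⁻¹ * (FreeGroup.of (some j))⁻¹)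
    (Or.inl (Or.inr ⟨i, j, h, rfl⟩))
  simp only [map_mul, map_inv] at h
  exact mul_inv_eq_iff_eq_mul.mp (mul_inv_eq_one.mp h)

lemma adj (i j : Fin m) (h : (j : ℕ) = (i : ℕ) + 1) :
    xgen m ν j * xgen m ν i = neg1 m ν * (xgen m ν i * xgen m ν j) := by
  have h := rel_one m ν
    (r := FreeGroup.of (some j) * FreeGroup.of (some i) *
      (FreeGroup.of none * FreeGroup.of (some i) * FreeGroup.of (some j))⁻¹)
    (Or.inr ⟨i, j, h, rfl⟩)
  simp only [map_mul, map_inv] at h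
  have h2 := mul_inv_eq_one.mp h
  show PresentedGroup.mk (Erel m ν) (FreeGroup.of (some j)) *
      PresentedGroup.mk (Erel m ν) (FreeGroup.of (some i)) =
    PresentedGroup.mk (Erel m ν) (FreeGroup.of none) *
      (PresentedGroup.mk (Erel m ν) (FreeGroup.of (some i)) *
        PresentedGroup.mk (Erel m ν) (FreeGroup.of (some j)))
  rw [h2]; group

lemma central : ∀ a : Egrp m ν, neg1 m ν * a = a * neg1 m ν := by
  intro a
  have h1 : (Subgroup.centralizer {neg1 m ν} : Subgroup (Egrp m ν)) = ⊤ := by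
    rw [eq_top_iff, ← PresentedGroup.closure_range_of (Erel m ν), Subgroup.closure_le]
    rintro x ⟨g, rfl⟩
    rw [SetLike.mem_coe, Subgroup.mem_centralizer_iff]
    rintro w rfl
    cases g with
    | none => rfl
    | some i => exact hzx m ν i
  have := h1 ▸ Subgroup.mem_top a
  exact Subgroup.mem_centralizer_iff.mp this _ rfl

lemma Kcases : ∀ w ∈ Subgroup.zpowers (neg1 m ν), w = 1 ∨ w = neg1 m ν := by
  intro w hw
  obtain ⟨k, rfl⟩ := Subgroup.mem_zpowers_iff.mp hw
  have h2 : (neg1 m ν) ^ (2 : ℤ) = 1 := by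
    rw [show (2 : ℤ) = (2 : ℕ) by rfl, zpow_natCast, sq]; exact hz2 m ν
  rcases Int.even_or_odd k with ⟨t, ht⟩ | ⟨t, ht⟩
  · left
    rw [ht, show t + t = 2 * t by ring, zpow_mul, h2, one_zpow]
  · right
    rw [ht, zpow_add, zpow_mul, h2, one_zpow, one_mul, zpow_one]

lemma Kcomm : ∀ w ∈ Subgroup.zpowers (neg1 m ν), ∀ a : Egrp m ν, a * w = w * a := by
  intro w hw a
  rcases Kcases m ν w hw with rfl | rfl
  · rw [one_mul, mul_one]
  · exact (central m ν a).symm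

/-- For fixed `b`, the set of `a` with commutator in `⟨z⟩` is a subgroup. -/
def Sb (b : Egrp m ν) : Subgroup (Egrp m ν) where
  carrier := {a | a * b * a⁻¹ * b⁻¹ ∈ Subgroup.zpowers (neg1 m ν)}
  one_mem' := by
    show (1 : Egrp m ν) * b * (1 : Egrp m ν)⁻¹ * b⁻¹ ∈ Subgroup.zpowers (neg1 m ν)
    rw [show (1 : Egrp m ν) * b * (1 : Egrp m ν)⁻¹ * b⁻¹ = 1 by group]
    exact one_mem _
  mul_mem' := by
    intro a₁ a₂ h₁ h₂
    simp only [Set.mem_setOf_eq] at *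
    have key : (a₁ * a₂) * b * (a₁ * a₂)⁻¹ * b⁻¹ =
        a₁ * (a₂ * b * a₂⁻¹ * b⁻¹) * a₁⁻¹ * (a₁ * b * a₁⁻¹ * b⁻¹) := by group
    have hc : a₁ * (a₂ * b * a₂⁻¹ * b⁻¹) * a₁⁻¹ = a₂ * b * a₂⁻¹ * b⁻¹ := by
      rw [Kcomm m ν _ h₂ a₁]; group
    rw [key, hc]
    exact mul_mem h₂ h₁
  inv_mem' := by
    intro a h
    simp only [Set.mem_setOf_eq] at *
    have key : a⁻¹ * b * (a⁻¹)⁻¹ * b⁻¹ = a⁻¹ * (a * b * a⁻¹ * b⁻¹)⁻¹ * a := by group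
    have hc : a⁻¹ * (a * b * a⁻¹ * b⁻¹)⁻¹ * a = (a * b * a⁻¹ * b⁻¹)⁻¹ := by
      rw [Kcomm m ν _ (inv_mem h) a⁻¹]; group
    rw [key, hc]
    exact inv_mem h

lemma swap_mem {x y : Egrp m ν} (h : x * y * x⁻¹ * y⁻¹ ∈ Subgroup.zpowers (neg1 m ν)) :
    y * x * y⁻¹ * x⁻¹ ∈ Subgroup.zpowers (neg1 m ν) := by
  have h2 := inv_mem h
  rwa [show (x * y * x⁻¹ * y⁻¹)⁻¹ = y * x * y⁻¹ * x⁻¹ by group] at h2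

lemma gen_pair (g g' : Option (Fin m)) :
    (PresentedGroup.of (rels := Erel m ν) g) * PresentedGroup.of g' *
      (PresentedGroup.of g)⁻¹ * (PresentedGroup.of g')⁻¹ ∈
        Subgroup.zpowers (neg1 m ν) := by
  have hcase : ∀ x y : Egrp m ν, x * y = y * x →
      x * y * x⁻¹ * y⁻¹ ∈ Subgroup.zpowers (neg1 m ν) := by
    intro x y h
    rw [h, show y * x * x⁻¹ * y⁻¹ = 1 by group]
    exact one_mem _
  cases g with
  | none => exact hcase _ _ (central m ν _)
  | some i =>
    cases g' with
    | none => exact hcase _ _ (central m ν _).symm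
    | some j =>
      show xgen m ν i * xgen m ν j * (xgen m ν i)⁻¹ * (xgen m ν j)⁻¹ ∈ _
      rcases Nat.lt_trichotomy (i : ℕ) (j : ℕ) with h | h | h
      · by_cases hj : (j : ℕ) = (i : ℕ) + 1
        · have h5 := adj m ν i j hj
          have he : xgen m ν i * xgen m ν j * (xgen m ν i)⁻¹ * (xgen m ν j)⁻¹
              = (neg1 m ν)⁻¹ := by
            have : neg1 m ν * (xgen m ν i * xgen m ν j * (xgen m ν i)⁻¹ * (xgen m ν j)⁻¹)
                = 1 := by
              calc neg1 m ν * (xgen m ν i * xgen m ν j * (xgen m ν i)⁻¹ * (xgen m ν j)⁻¹)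
                  = (neg1 m ν * (xgen m ν i * xgen m ν j)) * (xgen m ν i)⁻¹ *
                    (xgen m ν j)⁻¹ := by group
                _ = (xgen m ν j * xgen m ν i) * (xgen m ν i)⁻¹ * (xgen m ν j)⁻¹ := by
                    rw [← h5]
                _ = 1 := by group
            exact eq_inv_of_mul_eq_one_right this
          rw [he]
          exact inv_mem (Subgroup.mem_zpowers _)
        · exact hcase _ _ (far m ν i j (by omega))
      · have : i = j := Fin.ext h
        subst this
        exact hcase _ _ rfl
      · by_cases hi : (i : ℕ) = (j : ℕ) + 1
        · have h5 := adj m ν j i hi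
          have he : xgen m ν i * xgen m ν j * (xgen m ν i)⁻¹ * (xgen m ν j)⁻¹
              = neg1 m ν := by
            calc xgen m ν i * xgen m ν j * (xgen m ν i)⁻¹ * (xgen m ν j)⁻¹
                = (xgen m ν i * xgen m ν j) * (xgen m ν i)⁻¹ * (xgen m ν j)⁻¹ := by group
              _ = (neg1 m ν * (xgen m ν j * xgen m ν i)) * (xgen m ν i)⁻¹ *
                  (xgen m ν j)⁻¹ := by rw [h5]
              _ = neg1 m ν := by group
          rw [he]
          exact Subgroup.mem_zpowers _
        · exact hcase _ _ (far m ν j i (by omega)).symm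

lemma comm_mem (a b : Egrp m ν) :
    a * b * a⁻¹ * b⁻¹ ∈ Subgroup.zpowers (neg1 m ν) := by
  have claim1 : ∀ b : Egrp m ν,
      (∀ g' : Option (Fin m), (PresentedGroup.of g') * b * (PresentedGroup.of g')⁻¹ * b⁻¹ ∈
        Subgroup.zpowers (neg1 m ν)) →
      ∀ a : Egrp m ν, a * b * a⁻¹ * b⁻¹ ∈ Subgroup.zpowers (neg1 m ν) := by
    intro b hb a
    have h1 : (Sb m ν b : Subgroup (Egrp m ν)) = ⊤ := by
      rw [eq_top_iff, ← PresentedGroup.closure_range_of (Erel m ν), Subgroup.closure_le]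
      rintro x ⟨g, rfl⟩
      exact hb g
    have h2 : a ∈ Sb m ν b := by rw [h1]; exact Subgroup.mem_top a
    exact h2
  have claim2 : ∀ g' : Option (Fin m), ∀ b : Egrp m ν,
      (PresentedGroup.of g') * b * (PresentedGroup.of g')⁻¹ * b⁻¹ ∈
        Subgroup.zpowers (neg1 m ν) := by
    intro g' b
    apply swap_mem
    exact claim1 (PresentedGroup.of g') (fun g => gen_pair m ν g g') b
  exact claim1 b (fun g' => claim2 g' b) a

lemma key (a b : Egrp m ν) : a * b = b * a ∨ a * b = neg1 m ν * (b * a) := by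
  rcases Kcases m ν _ (comm_mem m ν a b) with h | h
  · left
    exact mul_inv_eq_iff_eq_mul.mp (mul_inv_eq_one.mp h)
  · right
    have h1 : a * b * a⁻¹ = neg1 m ν * b := mul_inv_eq_iff_eq_mul.mp h
    have h2 : a * b = neg1 m ν * b * a := mul_inv_eq_iff_eq_mul.mp h1
    rw [h2, mul_assoc]

end Stmt14Aux

/-- every non-central `x ∈ E_m^ν` is conjugate to `−x`, and every
nontrivial normal subgroup of `E_m^ν` intersects the center nontrivially. -/
theorem stmt14 (m : ℕ) (ν : ℤˣ) :
    (∀ x : Egrp m ν, x ∉ Subgroup.center (Egrp m ν) → IsConj x (neg1 m ν * x)) ∧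
    (∀ N : Subgroup (Egrp m ν), N.Normal → N ≠ ⊥ →
      ∃ g : Egrp m ν, g ∈ N ∧ g ∈ Subgroup.center (Egrp m ν) ∧ g ≠ 1) := by
  constructor
  · intro x hx
    rw [Subgroup.mem_center_iff] at hx
    push_neg at hx
    obtain ⟨g, hg⟩ := hx
    rcases Stmt14Aux.key m ν g x with h | h
    · exact absurd h hg
    · rw [isConj_iff]
      exact ⟨g, by rw [mul_inv_eq_iff_eq_mul, h, mul_assoc]⟩
  · intro N hN hNbot
    obtain ⟨⟨g, hgN⟩, hg1⟩ := Subgroup.ne_bot_iff_exists_ne_one.mp hNbot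
    simp only [ne_eq, Subgroup.mk_eq_one] at hg1
    by_cases hc : g ∈ Subgroup.center (Egrp m ν)
    · exact ⟨g, hgN, hc, hg1⟩
    · rw [Subgroup.mem_center_iff] at hc
      push_neg at hc
      obtain ⟨h, hh⟩ := hc
      rcases Stmt14Aux.key m ν h g with h' | h'
      · exact absurd h' hh
      · refine ⟨neg1 m ν, ?_, ?_, ?_⟩
        · have hz : h * g * h⁻¹ * g⁻¹ = neg1 m ν := by rw [h']; group
          rw [← hz]
          exact mul_mem (hN.conj_mem g hgN h) (inv_mem hgN)
        · exact Subgroup.mem_center_iff.mpr (fun a => (Stmt14Aux.central m ν a).symm)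
        · intro h0
          exact hh (by rw [h', h0, one_mul])
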